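/- (Rado) Let M be an n×n matrix with eigenvalues λ₁,…,λₙ, let X = [x₁ | ⋯ | x_r] with rank(X) = r < n and M xᵢ = λᵢ xᵢ for i = 1,…,r, and let 𝒞 be an arbitrary r×n matrix. Then the eigenvalues of M + X𝒞 are μ₁,…,μ_r, λ_{r+1},…,λₙ, where μ₁,…,μ_r are the eigenvalues of Ω + 𝒞X with Ω = diag(λ₁,…,λ_r). -/

import Mathlib

open Matrix Polynomial

private lemma charmatrix_add_aux {m : Type*} [DecidableEq m] [Fintype m]
    (P Q : Matrix m m ℂ) :
    charmatrix (P + Q) = charmatrix P - Q.map C := by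
  ext i j
  simp [charmatrix_apply, Matrix.sub_apply, Matrix.map_apply, map_add, sub_sub]

theorem rado (n r : ℕ) (hrn : r < n) (M : Matrix (Fin n) (Fin n) ℂ) (lam : Fin n → ℂ)
    (hchar : M.charpoly = ∏ i, (X - C (lam i)))
    (Xm : Matrix (Fin n) (Fin r) ℂ) (hrank : Xm.rank = r)
    (hcol : ∀ i : Fin r,
      M.mulVec (fun j => Xm j i) = lam (Fin.castLE hrn.le i) • fun j => Xm j i)
    (𝒞 : Matrix (Fin r) (Fin n) ℂ) :
    (M + Xm * 𝒞).charpoly =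
      (Matrix.diagonal (fun i : Fin r => lam (Fin.castLE hrn.le i)) + 𝒞 * Xm).charpoly *
        ∏ i ∈ Finset.univ.filter (fun i : Fin n => r ≤ (i : ℕ)), (X - C (lam i)) := by
  classical
  set Ω : Matrix (Fin r) (Fin r) ℂ :=
    Matrix.diagonal (fun i : Fin r => lam (Fin.castLE hrn.le i)) with hΩdef
  -- the eigenvector condition as a matrix identity
  have hMX : M * Xm = Xm * Ω := by
    ext j i
    have h := congrFun (hcol i) j
    simp only [Matrix.mulVec, dotProduct, Pi.smul_apply, smul_eq_mul] at h
    rw [Matrix.mul_apply, hΩdef, Matrix.mul_diagonal]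
    simpa [Matrix.mul_apply, mul_comm] using h
  -- intertwining identity for characteristic matrices
  have key : charmatrix M * Xm.map C = Xm.map C * charmatrix Ω := by
    have hs : charmatrix M = Matrix.diagonal (fun _ : Fin n => (X : ℂ[X])) - M.map C := by
      ext i j; simp [charmatrix_apply, Matrix.sub_apply, Matrix.map_apply]
    have hs' : charmatrix Ω = Matrix.diagonal (fun _ : Fin r => (X : ℂ[X])) - Ω.map C := by
      ext i j; simp [charmatrix_apply, Matrix.sub_apply, Matrix.map_apply]
    rw [hs, hs', Matrix.sub_mul, Matrix.mul_sub]
    congr 1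
    · ext i j
      rw [Matrix.diagonal_mul, Matrix.mul_diagonal, mul_comm]
    · rw [← Matrix.map_mul, ← Matrix.map_mul, hMX]
  -- pass to the field of rational functions
  set K := RatFunc ℂ with hK
  set φ : ℂ[X] →+* K := algebraMap ℂ[X] K with hφdef
  have hφ : Function.Injective φ := IsFractionRing.injective ℂ[X] K
  set ψ : ℂ →+* K := φ.comp (C : ℂ →+* ℂ[X]) with hψdef
  set A : Matrix (Fin n) (Fin n) K := (charmatrix M).map φ with hA
  set B : Matrix (Fin r) (Fin r) K := (charmatrix Ω).map φ with hB
  set U : Matrix (Fin n) (Fin r) K := Xm.map ψ with hU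
  set V : Matrix (Fin r) (Fin n) K := 𝒞.map ψ with hV
  have hmapmap : ∀ {p q : ℕ} (N : Matrix (Fin p) (Fin q) ℂ),
      (N.map C).map φ = N.map ψ := by
    intro p q N
    rw [Matrix.map_map]
    rfl
  have hAU : A * U = U * B := by
    rw [hA, hB, hU, ← hmapmap, ← Matrix.map_mul, ← Matrix.map_mul, key]
  have hdA : A.det = φ M.charpoly := by
    rw [hA, Matrix.charpoly, RingHom.map_det, RingHom.mapMatrix_apply]
  have hdB : B.det = φ Ω.charpoly := by
    rw [hB, Matrix.charpoly, RingHom.map_det, RingHom.mapMatrix_apply]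
  have hA0 : IsUnit A.det := by
    rw [isUnit_iff_ne_zero, hdA]
    simp only [map_ne_zero_iff φ hφ]
    exact M.charpoly_monic.ne_zero
  have hB0 : IsUnit B.det := by
    rw [isUnit_iff_ne_zero, hdB]
    simp only [map_ne_zero_iff φ hφ]
    exact Ω.charpoly_monic.ne_zero
  have hBne : B.det ≠ 0 := by
    rw [← isUnit_iff_ne_zero]; exact hB0
  have hAinvU : A⁻¹ * U = U * B⁻¹ := by
    have h1 : A⁻¹ * U * (B * B⁻¹) = A⁻¹ * U := by
      rw [Matrix.mul_nonsing_inv B hB0, Matrix.mul_one]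
    rw [← h1, ← Matrix.mul_assoc, Matrix.mul_assoc A⁻¹ U B, ← hAU, ← Matrix.mul_assoc,
      Matrix.nonsing_inv_mul A hA0, Matrix.one_mul]
  -- the key determinant identity
  have hmain : ((charmatrix (M + Xm * 𝒞)).map φ).det * B.det =
      A.det * ((charmatrix (Ω + 𝒞 * Xm)).map φ).det := by
    have hcm1 : (charmatrix (M + Xm * 𝒞)).map φ = A + (-U) * V := by
      rw [charmatrix_add_aux, Matrix.map_sub _ (fun a b => map_sub φ a b), hmapmap,
        Matrix.map_mul, Matrix.neg_mul, ← sub_eq_add_neg, hA, hU, hV]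
    have hcm2 : (charmatrix (Ω + 𝒞 * Xm)).map φ = B - V * U := by
      rw [charmatrix_add_aux, Matrix.map_sub _ (fun a b => map_sub φ a b), hmapmap,
        Matrix.map_mul, hB, hU, hV]
    have e1 : (1 : Matrix (Fin r) (Fin r) K) + V * A⁻¹ * -U = 1 - (V * U) * B⁻¹ := by
      rw [Matrix.mul_neg, ← sub_eq_add_neg, Matrix.mul_assoc, hAinvU, ← Matrix.mul_assoc]
    have e2 : (1 : Matrix (Fin r) (Fin r) K) - B⁻¹ * (V * U) = B⁻¹ * (B - V * U) := by
      rw [Matrix.mul_sub, Matrix.nonsing_inv_mul B hB0]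
    rw [hcm1, hcm2, Matrix.det_add_mul (-U) V hA0, e1, Matrix.det_one_sub_mul_comm, e2,
      Matrix.det_mul, Matrix.det_nonsing_inv, Ring.inverse_eq_inv']
    rw [mul_assoc, mul_comm B.det⁻¹, mul_assoc, inv_mul_cancel₀ hBne, mul_one]
  -- pull back to a polynomial identity
  have hpoly : (M + Xm * 𝒞).charpoly * Ω.charpoly = M.charpoly * (Ω + 𝒞 * Xm).charpoly := by
    apply hφ
    simp only [_root_.map_mul, Matrix.charpoly, RingHom.map_det, RingHom.mapMatrix_apply]
    exact hmain
  -- explicit charpoly of the diagonal block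
  have hΩchar : Ω.charpoly = ∏ i : Fin r, (X - C (lam (Fin.castLE hrn.le i))) := by
    have hd : charmatrix Ω
        = Matrix.diagonal (fun i : Fin r => (X : ℂ[X]) - C (lam (Fin.castLE hrn.le i))) := by
      ext i j
      by_cases h : i = j
      · subst h; simp [hΩdef]
      · simp [hΩdef, h, Matrix.diagonal_apply_ne _ h]
    rw [Matrix.charpoly, hd, Matrix.det_diagonal]
  -- split the product over Fin n
  have hsplit : (∏ i : Fin n, (X - C (lam i))) =
      (∏ i : Fin r, (X - C (lam (Fin.castLE hrn.le i)))) *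
        ∏ i ∈ Finset.univ.filter (fun i : Fin n => r ≤ (i : ℕ)), (X - C (lam i)) := by
    rw [← Finset.prod_filter_mul_prod_filter_not Finset.univ (fun i : Fin n => (i : ℕ) < r)]
    congr 1
    · refine (Finset.prod_bij (fun (a : Fin r) _ => Fin.castLE hrn.le a) ?_ ?_ ?_ ?_).symm
      · intro a _
        simp [Fin.castLE]
      · intro a _ b _ hab
        exact Fin.castLE_injective hrn.le hab
      · intro b hb
        simp only [Finset.mem_filter, Finset.mem_univ, true_and] at hb
        exact ⟨⟨(b : ℕ), hb⟩, Finset.mem_univ _, rfl⟩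
      · intro a _
        rfl
    · congr 1
      ext i
      simp [not_lt]
  -- conclude by cancellation
  have hPne : (∏ i : Fin r, (X - C (lam (Fin.castLE hrn.le i)))) ≠ 0 :=
    (monic_prod_of_monic _ _ fun i _ => monic_X_sub_C _).ne_zero
  rw [hchar, hΩchar, hsplit] at hpoly
  apply mul_left_cancel₀ hPne
  linear_combination hpoly
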